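/- Let P be a reducible lossy VASS with variables x_1,…,x_n and let 𝒯 = CFA(P) be the transition system obtained by control flow abstraction. If there exists an enumeration τ_1,…,τ_k of 𝒯 together with variables y_1,…,y_k satisfying the ranking condition (i.e., the Ranking algorithm succeeds and returns the lexicographic ranking function ⟨y_1,…,y_k⟩), then P is terminating, i.e., P has no infinite trace. -/

import Mathlib

open scoped BigOperators

/-- Update vectors in `ℤⁿ`. -/
abbrev Upd (n : ℕ) := Fin n → ℤ

/-- Valuations of the variables (values are natural numbers). -/
abbrev Valu (n : ℕ) := Fin n → ℕ

/-- An edge (transition) of a VASS: source location, update vector, target location. -/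
abbrev VEdge (n : ℕ) (L : Type*) := L × Upd n × L

/-- A lossy vector addition system with states over `n` variables and locations `L`. -/
structure VASS (n : ℕ) (L : Type*) where
  E : Set (VEdge n L)

namespace VASS

variable {n : ℕ} {L : Type*}

/-- `FPath P a p b`: the list of edges `p` is a finite path of `P` from `a` to `b`. -/
inductive FPath (P : VASS n L) : L → List (VEdge n L) → L → Prop
  | nil (a : L) : FPath P a [] a
  | cons {a b c : L} {d : Upd n} {p : List (VEdge n L)} :
      (a, d, b) ∈ P.E → FPath P b p c → FPath P a ((a, d, b) :: p) c

/-- `x` occurs among the locations of the path `p` starting at location `a`. -/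
def Visits (a : L) (p : List (VEdge n L)) (x : L) : Prop :=
  x = a ∨ ∃ e ∈ p, e.2.2 = x

/-- `a` dominates `b` (w.r.t. the entry location):
every path from the entry to `b` includes `a`. -/
def Dominates (P : VASS n L) (entry a b : L) : Prop :=
  ∀ p : List (VEdge n L), P.FPath entry p b → Visits entry p a

/-- An edge `l₁ → l₂` is a back edge if `l₂` dominates `l₁`. -/
def BackEdge (P : VASS n L) (entry : L) (e : VEdge n L) : Prop :=
  e ∈ P.E ∧ P.Dominates entry e.2.2 e.1

/-- All locations are reachable from the entry location. -/
def EntryReach (P : VASS n L) (entry : L) : Prop :=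
  ∀ x : L, ∃ p, P.FPath entry p x

/-- `P` is reducible: the graph becomes acyclic after removing all back edges. -/
def Reducible (P : VASS n L) (entry : L) : Prop :=
  ∀ (a : L) (p : List (VEdge n L)), (∀ e ∈ p, ¬ P.BackEdge entry e) → P.FPath a p a → p = []

/-- `h` is a loop header: the target of some back edge. -/
def LoopHeader (P : VASS n L) (entry h : L) : Prop :=
  ∃ e, P.BackEdge entry e ∧ e.2.2 = h

/-- The natural loop of the loop header `h`: all locations `x` dominated by `h` such that
there is a back edge `m → h` and a path from `x` to `m` that does not contain `h`. -/
def NaturalLoop (P : VASS n L) (entry h : L) : Set L :=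
  {x | P.Dominates entry h x ∧ ∃ e, P.BackEdge entry e ∧ e.2.2 = h ∧
    ∃ p, P.FPath x p e.1 ∧ ∀ e' ∈ p, e'.2.2 ≠ h}

/-- `p` is a loop-path at loop header `l`: a simple cyclic path starting and ending at `l`
that visits only locations inside the natural loop of `l`. -/
def LoopPath (P : VASS n L) (entry l : L) (p : List (VEdge n L)) : Prop :=
  P.LoopHeader entry l ∧ P.FPath l p l ∧ p ≠ [] ∧ (p.map Prod.fst).Nodup ∧
    ∀ x, Visits l p x → x ∈ P.NaturalLoop entry l

/-- The contracted update of a path: the sum of the update vectors along the path. -/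
def contractUpd (p : List (VEdge n L)) : Upd n :=
  (p.map (fun e => e.2.1)).sum

/-- Control flow abstraction: the transition system containing the contracted update
of every loop-path of `P`. -/
def CFA (P : VASS n L) (entry : L) : Set (Upd n) :=
  {c | ∃ l p, P.LoopPath entry l p ∧ c = contractUpd p}

/-- `InstanceAux P h π ν D`: `ν` is an instance of the loop-path `π` (whose header is `h`),
interleaving the designated transitions of `π` with cyclic filler paths avoiding `h`;
`D` is the set of positions in `ν` of the designated transitions of `π`. -/
inductive InstanceAux (P : VASS n L) (h : L) :
    List (VEdge n L) → List (VEdge n L) → Set ℕ → Prop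
  | single (e : VEdge n L) : InstanceAux P h [e] [e] {0}
  | cons (e : VEdge n L) (q rest ν : List (VEdge n L)) (D : Set ℕ) :
      P.FPath e.2.2 q e.2.2 → e.2.2 ≠ h → (∀ e' ∈ q, e'.2.2 ≠ h) →
      InstanceAux P h rest ν D →
      InstanceAux P h (e :: rest) (e :: (q ++ ν)) (insert 0 ((fun m => m + q.length + 1) '' D))

/-- `ν` is an instance of the loop-path `π`, with `D` the positions of the
designated transitions of `π` inside `ν`. -/
def IsInstance (P : VASS n L) (π ν : List (VEdge n L)) (D : Set ℕ) : Prop :=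
  ∃ e rest, π = e :: rest ∧ P.InstanceAux e.1 π ν D

/-- The path `p` contains an instance of `π` starting at position `i` and of length `k`. -/
def InstanceAt (P : VASS n L) (π p : List (VEdge n L)) (i k : ℕ) : Prop :=
  i + k ≤ p.length ∧ 1 ≤ k ∧ ∃ D, P.IsInstance π ((p.drop i).take k) D

/-- The number of instances of the loop-path `π` contained in the path `p`. -/
noncomputable def numInstances (P : VASS n L) (π p : List (VEdge n L)) : ℕ :=
  {q : ℕ × ℕ | P.InstanceAt π p q.1 q.2}.ncard

/-- The transition occurrence at position `t` of the path `p` belongs to the instance of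
the loop-path `π` contained in `p` at position `i` with length `k` (i.e. `t` is one of the
designated transitions of that instance). -/
def BelongsAt (P : VASS n L) (π p : List (VEdge n L)) (i k t : ℕ) : Prop :=
  i + k ≤ p.length ∧ 1 ≤ k ∧ i ≤ t ∧ t < i + k ∧
    ∃ D, P.IsInstance π ((p.drop i).take k) D ∧ (t - i) ∈ D

/-- An infinite trace of the VASS `P`. -/
def InfTrace (P : VASS n L) (locs : ℕ → L) (upds : ℕ → Upd n) (vals : ℕ → Valu n) : Prop :=
  ∀ i, (locs i, upds i, locs (i+1)) ∈ P.E ∧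
    ∀ j, (vals (i+1) j : ℤ) ≤ (vals i j : ℤ) + upds i j

/-- `P` is terminating: it has no infinite trace. -/
def Terminating (P : VASS n L) : Prop :=
  ¬ ∃ locs upds vals, P.InfTrace locs upds vals

/-- The valuations `vals` form a trace of `P` along the finite path `p`. -/
def FinTraceVals (P : VASS n L) (p : List (VEdge n L)) (vals : ℕ → Valu n) : Prop :=
  ∀ (i : ℕ) (hi : i < p.length), ∀ j,
    (vals (i+1) j : ℤ) ≤ (vals i j : ℤ) + (p.get ⟨i, hi⟩).2.1 j

end VASS

/-- An enumeration `τ₁,…,τ_k` of the transition system `T` together with variables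
`y₁,…,y_k` satisfies the ranking condition of the `Ranking` algorithm:
`τᵢ ⊨ yᵢ' < yᵢ`, and `τⱼ ⊨ yᵢ' ≤ yᵢ` for all `j ≥ i`. -/
def RankingCondition {n : ℕ} (T : Set (Upd n)) {k : ℕ}
    (τ : Fin k → Upd n) (y : Fin k → Fin n) : Prop :=
  Function.Injective τ ∧ Set.range τ = T ∧
    (∀ i, τ i (y i) < 0) ∧ ∀ i j : Fin k, i ≤ j → τ j (y i) ≤ 0

/-- An infinite lossy execution of the transition system `T`. -/
def LossyExec {n : ℕ} (T : Set (Upd n)) (v : ℕ → Valu n) (d : ℕ → Upd n) : Prop :=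
  ∀ m, d m ∈ T ∧ ∀ j, (v (m+1) j : ℤ) ≤ (v m j : ℤ) + d m j

/-- A finite lossy execution `v 0, …, v N` of the transition system `T`. -/
def FinLossyExec {n : ℕ} (T : Set (Upd n)) (N : ℕ) (v : ℕ → Valu n) (d : ℕ → Upd n) : Prop :=
  ∀ m < N, d m ∈ T ∧ ∀ j, (v (m+1) j : ℤ) ≤ (v m j : ℤ) + d m j

namespace VASS
variable {n : ℕ} {L : Type*} {P : VASS n L}

lemma fpath_append {a c : L} {p q : List (VEdge n L)} :
    P.FPath a (p ++ q) c ↔ ∃ b, P.FPath a p b ∧ P.FPath b q c := by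
  constructor
  · induction p generalizing a with
    | nil => intro h; exact ⟨a, .nil a, h⟩
    | cons e p ih =>
      intro h
      rcases e with ⟨x, d, z⟩
      cases h with
      | cons he hp =>
        obtain ⟨b, h1, h2⟩ := ih hp
        exact ⟨b, .cons he h1, h2⟩
  · rintro ⟨b, h1, h2⟩
    induction h1 with
    | nil => exact h2
    | cons he _ ih => exact .cons he (ih h2)

lemma fpath_head_src {a c : L} {e : VEdge n L} {p : List (VEdge n L)}
    (h : P.FPath a (e :: p) c) : e.1 = a ∧ e ∈ P.E ∧ P.FPath e.2.2 p c := by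
  rcases e with ⟨x, d, z⟩
  cases h with
  | cons he hp => exact ⟨rfl, he, hp⟩

lemma fpath_nil_eq {a c : L} (h : P.FPath a [] c) : a = c := by
  cases h; rfl

lemma fpath_split {a c : L} {p : List (VEdge n L)} (h : P.FPath a p c)
    (i : ℕ) (hi : i < p.length) :
    P.FPath a (p.take i) p[i].1 ∧ P.FPath p[i].1 (p.drop i) c := by
  have h' : P.FPath a (p.take i ++ p.drop i) c := by rwa [List.take_append_drop]
  obtain ⟨b, h1, h2⟩ := fpath_append.1 h'
  have hd : p.drop i = p[i] :: p.drop (i+1) := List.drop_eq_getElem_cons hi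
  rw [hd] at h2
  obtain ⟨hsrc, _, _⟩ := fpath_head_src h2
  rw [← hd] at h2
  rw [← hsrc] at h1 h2
  exact ⟨h1, h2⟩

lemma fpath_chain {a c : L} {p : List (VEdge n L)} (h : P.FPath a p c)
    (i : ℕ) (hi : i + 1 < p.length) : p[i+1].1 = p[i].2.2 := by
  have h2 := (fpath_split h i (by omega)).2
  rw [List.drop_eq_getElem_cons (by omega : i < p.length)] at h2
  have h3 := (fpath_head_src h2).2.2
  rw [List.drop_eq_getElem_cons hi] at h3
  exact (fpath_head_src h3).1

lemma fpath_last_tgt {a c : L} {p : List (VEdge n L)} (h : P.FPath a p c)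
    (hl : p.length - 1 < p.length) : (p[p.length - 1]'hl).2.2 = c := by
  have h2 := (fpath_split h (p.length - 1) hl).2
  rw [List.drop_eq_getElem_cons hl] at h2
  have h3 := (fpath_head_src h2).2.2
  have : p.drop (p.length - 1 + 1) = [] := by
    apply List.drop_eq_nil_of_le; omega
  rw [this] at h3
  exact fpath_nil_eq h3

lemma fpath_src0 {a c : L} {p : List (VEdge n L)} (h : P.FPath a p c)
    (hne : p ≠ []) : (p[0]'(List.length_pos_iff.2 hne)).1 = a := by
  rcases p with _ | ⟨e, p⟩
  · exact absurd rfl hne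
  · exact (fpath_head_src h).1

lemma fpath_snoc {a b c : L} {p : List (VEdge n L)} {d : Upd n}
    (h : P.FPath a p b) (he : (b, d, c) ∈ P.E) : P.FPath a (p ++ [(b, d, c)]) c :=
  fpath_append.2 ⟨b, h, .cons he (.nil c)⟩

lemma contractUpd_append (p q : List (VEdge n L)) :
    contractUpd (p ++ q) = contractUpd p + contractUpd q := by
  simp [contractUpd]

lemma contractUpd_perm {p q : List (VEdge n L)} (h : p.Perm q) :
    contractUpd p = contractUpd q :=
  List.Perm.sum_eq (h.map _)

lemma sum_apply_list (l : List (Upd n)) (j : Fin n) :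
    l.sum j = (l.map (fun c => c j)).sum := by
  induction l with
  | nil => rfl
  | cons c l ih => simp [ih]

end VASS
namespace VASS
variable {n : ℕ} {L : Type*} {P : VASS n L} {entry : L}

lemma simple_cycle_cfa (hred : P.Reducible entry) {b : L} {q : List (VEdge n L)}
    (hq : P.FPath b q b) (hne : q ≠ []) (hnd : (q.map Prod.fst).Nodup) :
    contractUpd q ∈ P.CFA entry := by
  -- find a back edge on the cycle
  have hbe : ∃ e ∈ q, P.BackEdge entry e := by
    by_contra hc
    push_neg at hc
    exact hne (hred b q hc hq)
  obtain ⟨e, heq, hbe⟩ := hbe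
  obtain ⟨q1, q2, rfl⟩ := List.append_of_mem heq
  obtain ⟨m, dd, hh⟩ := e
  -- split the original cycle
  obtain ⟨c0, h1, h2⟩ := fpath_append.1 hq
  obtain ⟨hc0, heE, h3⟩ := fpath_head_src h2
  simp only at hc0 h3 heE
  subst hc0
  -- the rotated cycle p
  set e : VEdge n L := (m, dd, hh) with he_def
  set r : List (VEdge n L) := q2 ++ q1 with hr_def
  set p : List (VEdge n L) := r ++ [e] with hp_def
  have hpr : P.FPath hh r m := fpath_append.2 ⟨b, h3, h1⟩
  have hp : P.FPath hh p hh := fpath_snoc hpr heE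
  have hplen : p.length = r.length + 1 := by simp [hp_def]
  have hperm : p.Perm (q1 ++ e :: q2) := by
    have h1p : ((q2 ++ q1) ++ [e]).Perm (e :: (q2 ++ q1)) := by
      simpa using (List.perm_append_comm (l₁ := q2 ++ q1) (l₂ := [e]))
    have h2p : (e :: (q2 ++ q1)).Perm (q1 ++ e :: q2) := by
      simpa using (List.perm_append_comm (l₁ := e :: q2) (l₂ := q1))
    exact h1p.trans h2p
  have hndp : (p.map Prod.fst).Nodup := ((hperm.map Prod.fst).nodup_iff).2 hnd
  have hpne : p ≠ [] := by simp [hp_def]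
  -- no edge of r targets hh
  have claim : ∀ e' ∈ r, e'.2.2 ≠ hh := by
    intro e' he' habs
    obtain ⟨i, hi, hie⟩ := List.mem_iff_getElem.1 he'
    have hi1 : i + 1 < p.length := by omega
    have hpi : p[i]'(by omega) = e' := (List.getElem_append_left hi).trans hie
    have hch : (p[i+1]'hi1).1 = (p[i]'(by omega)).2.2 := fpath_chain hp i hi1
    have h0 : (p[0]'(by omega)).1 = hh := fpath_src0 hp hpne
    have : (p.map Prod.fst)[i+1]'(by simpa using hi1) = (p.map Prod.fst)[0]'(by simp; omega) := by
      simp only [List.getElem_map]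
      rw [hch, h0, hpi, habs]
    have := (List.Nodup.getElem_inj_iff hndp).1 this
    omega
  -- common step: membership in the natural loop
  have key : ∀ x (w : List (VEdge n L)), P.FPath x w m → (∀ e' ∈ w, e'.2.2 ≠ hh) →
      x ∈ P.NaturalLoop entry hh := by
    intro x w hfw hwt
    have hdom : P.Dominates entry hh x := by
      intro rp hrp
      by_contra hnv
      simp only [Visits, not_or, not_exists] at hnv
      push_neg at hnv
      obtain ⟨hne2, hnv⟩ := hnv
      have : Visits entry (rp ++ w) hh := hbe.2 (rp ++ w) (fpath_append.2 ⟨x, hrp, hfw⟩)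
      rcases this with h' | ⟨e'', he'', htg⟩
      · exact hne2 h'
      · rcases List.mem_append.1 he'' with h' | h'
        · exact hnv e'' h' htg
        · exact hwt e'' h' htg
    exact ⟨hdom, e, hbe, rfl, w, hfw, hwt⟩
  -- p is a loop path
  have hlp : P.LoopPath entry hh p := by
    refine ⟨⟨e, hbe, rfl⟩, hp, hpne, hndp, ?_⟩
    intro x hvis
    rcases hvis with rfl | ⟨e', he', htg⟩
    · exact key _ r hpr claim
    · rcases List.mem_append.1 he' with h' | h'
      · -- e' ∈ r
        by_cases hxh : x = hh
        · subst hxh; exact key _ r hpr claim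
        obtain ⟨i, hi, hie⟩ := List.mem_iff_getElem.1 h'
        have hi1 : i + 1 < p.length := by omega
        have hpi : p[i]'(by omega) = e' := (List.getElem_append_left hi).trans hie
        have hch : (p[i+1]'hi1).1 = (p[i]'(by omega)).2.2 := fpath_chain hp i hi1
        have hsp := (fpath_split hp (i+1) hi1).2
        have hdrop : p.drop (i+1) = r.drop (i+1) ++ [e] := by
          rw [hp_def, List.drop_append_of_le_length (by omega)]
        rw [hdrop] at hsp
        obtain ⟨c1, hw1, hw2⟩ := fpath_append.1 hsp
        obtain ⟨hc1, _, hw3⟩ := fpath_head_src hw2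
        have hc1m : c1 = m := hc1.symm
        subst hc1m
        rw [hch, hpi, htg] at hw1
        exact key x (r.drop (i+1)) hw1 (fun e'' he'' => claim e'' (List.mem_of_mem_drop he''))
      · -- e' = e, so x = hh
        have he'e : e' = e := by simpa using h'
        subst he'e
        have hx : x = hh := htg.symm
        subst hx
        exact key _ r hpr claim
  exact ⟨hh, p, hlp, (contractUpd_perm hperm).symm⟩

end VASS
namespace VASS
variable {n : ℕ} {L : Type*} {P : VASS n L} {entry : L}

lemma cycle_decomp_aux (hred : P.Reducible entry) :
    ∀ (N : ℕ) (p : List (VEdge n L)) (a : L), p.length ≤ N → P.FPath a p a → p ≠ [] →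
    ∃ l : List (Upd n), l ≠ [] ∧ (∀ c ∈ l, c ∈ P.CFA entry) ∧ contractUpd p = l.sum := by
  intro N
  induction N with
  | zero =>
    intro p a hlen _ hne
    exact absurd (List.length_eq_zero_iff.1 (Nat.le_zero.1 hlen)) hne
  | succ N ih =>
    intro p a hlen hp hne
    by_cases hnd : (p.map Prod.fst).Nodup
    · exact ⟨[contractUpd p], by simp, by simpa using simple_cycle_cfa hred hp hne hnd,
        by simp⟩
    · -- find a repeated source
      have hninj : ¬ Function.Injective (p.map Prod.fst).get := by
        rw [← List.nodup_iff_injective_get]; exact hnd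
      simp only [Function.Injective, not_forall] at hninj
      obtain ⟨⟨i0, hi0⟩, ⟨j0, hj0⟩, hget, hne0⟩ := hninj
      have hlenm : (p.map Prod.fst).length = p.length := by simp
      have hi0' : i0 < p.length := by rw [← hlenm]; exact hi0
      have hj0' : j0 < p.length := by rw [← hlenm]; exact hj0
      have hij0 : i0 ≠ j0 := by
        intro h; exact hne0 (by simp [Fin.ext_iff, h])
      -- wlog i < j
      obtain ⟨i, j, hiL, hjL, hij, hsrc⟩ :
          ∃ (i j : ℕ) (hi : i < p.length) (hj : j < p.length), i < j ∧
            (p[i]'hi).1 = (p[j]'hj).1 := by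
        rcases Nat.lt_or_ge i0 j0 with h | h
        · refine ⟨i0, j0, hi0', hj0', h, ?_⟩
          have := hget
          simpa [List.get_eq_getElem, List.getElem_map] using this
        · refine ⟨j0, i0, hj0', hi0', by omega, ?_⟩
          have := hget.symm
          simpa [List.get_eq_getElem, List.getElem_map] using this
      set mid : List (VEdge n L) := (p.drop i).take (j - i) with hmid_def
      set q : List (VEdge n L) := p.take i ++ p.drop j with hq_def
      have hdl : (p.drop i).length = p.length - i := by simp
      have hji : j - i < (p.drop i).length := by omega
      obtain ⟨h1, h2⟩ := fpath_split hp i hiL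
      obtain ⟨h3, h4⟩ := fpath_split h2 (j - i) hji
      have hdg : ((p.drop i)[j - i]'hji) = p[j]'hjL := by
        rw [List.getElem_drop]
        congr 1
        omega
      rw [hdg] at h3 h4
      have hdd : (p.drop i).drop (j - i) = p.drop j := by
        rw [List.drop_drop]
        congr 1
        omega
      rw [hdd] at h4
      rw [← hsrc] at h3 h4
      -- the removed cycle mid
      have hmidp : P.FPath (p[i]'hiL).1 mid (p[i]'hiL).1 := h3
      have hmidne : mid ≠ [] := by
        have : mid.length = j - i := by
          rw [hmid_def, List.length_take]
          omega
        intro hmn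
        rw [hmn] at this
        simp at this
        omega
      have hmidlen : mid.length ≤ N := by
        rw [hmid_def, List.length_take]
        omega
      obtain ⟨l1, hl1ne, hl1mem, hl1sum⟩ := ih mid (p[i]'hiL).1 hmidlen hmidp hmidne
      -- the remaining cycle q
      have hqp : P.FPath a q a := fpath_append.2 ⟨(p[i]'hiL).1, h1, h4⟩
      have hqlen : q.length ≤ N := by
        rw [hq_def, List.length_append, List.length_take, List.length_drop]
        omega
      -- contractUpd p = contractUpd mid + contractUpd q
      have hpeq : p = p.take i ++ (mid ++ p.drop j) := by
        rw [hmid_def, ← hdd, List.take_append_drop, List.take_append_drop]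
      have hsum : contractUpd p = contractUpd mid + contractUpd q := by
        rw [hq_def]
        conv_lhs => rw [hpeq]
        rw [contractUpd_append, contractUpd_append, contractUpd_append]
        abel
      by_cases hqne : q = []
      · refine ⟨l1, hl1ne, hl1mem, ?_⟩
        rw [hsum, hqne, hl1sum]
        simp [contractUpd]
      · obtain ⟨l2, _, hl2mem, hl2sum⟩ := ih q a hqlen hqp hqne
        refine ⟨l1 ++ l2, by simp [hl1ne], ?_, ?_⟩
        · intro c hc
          rcases List.mem_append.1 hc with h | h
          · exact hl1mem c h
          · exact hl2mem c h
        · rw [hsum, hl1sum, hl2sum, List.sum_append]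

lemma cycle_decomp (hred : P.Reducible entry) {a : L} {p : List (VEdge n L)}
    (hp : P.FPath a p a) (hne : p ≠ []) :
    ∃ l : List (Upd n), l ≠ [] ∧ (∀ c ∈ l, c ∈ P.CFA entry) ∧ contractUpd p = l.sum :=
  cycle_decomp_aux hred p.length p a le_rfl hp hne

end VASS
lemma list_min_exists {α : Type*} [LinearOrder α] :
    ∀ (J : List α), J ≠ [] → ∃ m ∈ J, ∀ r ∈ J, m ≤ r := by
  intro J
  induction J with
  | nil => intro h; exact absurd rfl h
  | cons a J ih =>
    intro _
    rcases eq_or_ne J [] with rfl | hJ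
    · exact ⟨a, by simp⟩
    · obtain ⟨m, hm, hmin⟩ := ih hJ
      rcases le_total a m with h | h
      · exact ⟨a, by simp, by
          intro r hr
          rcases List.mem_cons.1 hr with rfl | hr
          · exact le_rfl
          · exact h.trans (hmin r hr)⟩
      · exact ⟨m, List.mem_cons_of_mem _ hm, by
          intro r hr
          rcases List.mem_cons.1 hr with rfl | hr
          · exact h
          · exact hmin r hr⟩

lemma list_lift {α β : Type*} (τ : α → β) :
    ∀ (l : List β), (∀ c ∈ l, c ∈ Set.range τ) → ∃ J : List α, J.map τ = l := by
  intro l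
  induction l with
  | nil => exact fun _ => ⟨[], rfl⟩
  | cons c l ih =>
    intro h
    obtain ⟨J, hJ⟩ := ih fun c hc => h c (List.mem_cons_of_mem _ hc)
    obtain ⟨s, hs⟩ := h c List.mem_cons_self
    exact ⟨s :: J, by simp [hJ, hs]⟩

lemma list_sum_nonpos : ∀ (l : List ℤ), (∀ x ∈ l, x ≤ 0) → l.sum ≤ 0 := by
  intro l
  induction l with
  | nil => intro _; simp
  | cons a l ih =>
    intro h
    have := h a List.mem_cons_self
    have := ih fun x hx => h x (List.mem_cons_of_mem _ hx)
    simp only [List.sum_cons]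
    omega

lemma list_sum_neg (l : List ℤ) (h : ∀ x ∈ l, x ≤ 0) {x : ℤ} (hx : x ∈ l) (hxneg : x < 0) :
    l.sum < 0 := by
  obtain ⟨u, v, rfl⟩ := List.append_of_mem hx
  have hu : u.sum ≤ 0 := list_sum_nonpos u fun z hz => h z (by simp [hz])
  have hv : v.sum ≤ 0 := list_sum_nonpos v fun z hz => h z (by simp [hz])
  simp only [List.sum_append, List.sum_cons]
  omega

lemma no_lex_descent : ∀ (k : ℕ) (V : ℕ → Fin k → ℕ),
    (∀ i, ∃ m : Fin k, (∀ r, r ≤ m → V (i+1) r ≤ V i r) ∧ V (i+1) m < V i m) → False := by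
  intro k
  induction k with
  | zero => intro V h; exact (h 0).choose.elim0
  | succ k ih =>
    intro V h
    have hanti : ∀ i, V (i+1) 0 ≤ V i 0 := fun i =>
      (h i).choose_spec.1 0 (Fin.zero_le _)
    have hmono : ∀ i j, i ≤ j → V j 0 ≤ V i 0 := by
      intro i j hij
      induction j, hij using Nat.le_induction with
      | base => exact le_rfl
      | succ j hij ihj => exact (hanti j).trans ihj
    -- the first coordinate stabilizes
    obtain ⟨N, hN⟩ : ∃ N, V N 0 = sInf (Set.range fun i => V i 0) :=
      Nat.sInf_mem (Set.range_nonempty _)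
    have hstab : ∀ i, N ≤ i → V i 0 = V N 0 := by
      intro i hi
      have h1 : V i 0 ≤ V N 0 := hmono N i hi
      have h2 : V N 0 ≤ V i 0 := by
        rw [hN]; exact Nat.sInf_le ⟨i, rfl⟩
      omega
    -- shift and project
    have h' : ∀ j : ℕ, ∃ m : Fin k,
        (∀ r, r ≤ m → V (N + j + 1) r.succ ≤ V (N + j) r.succ) ∧
        V (N + j + 1) m.succ < V (N + j) m.succ := by
      intro j
      obtain ⟨m, hle, hlt⟩ := h (N + j)
      have hm0 : m ≠ 0 := by
        intro hm
        subst hm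
        have h1 := hstab (N + j) (by omega)
        have h2 := hstab (N + j + 1) (by omega)
        omega
      refine ⟨m.pred hm0, ?_, ?_⟩
      · intro r hr
        apply hle
        have : r.succ ≤ (m.pred hm0).succ := Fin.succ_le_succ_iff.2 hr
        rwa [Fin.succ_pred] at this
      · rw [Fin.succ_pred]
        exact hlt
    exact ih (fun j r => V (N + j) r.succ) h'

/-- If the `Ranking` algorithm succeeds on the control flow abstraction
of a reducible lossy VASS `P`, i.e. there is an enumeration `τ₁,…,τ_k` of `CFA P` together
with variables `y₁,…,y_k` satisfying the ranking condition, then `P` is terminating. -/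
theorem vass_ranking_terminating
    {n : ℕ} {L : Type*} [Finite L] (P : VASS n L) (entry : L)
    (hEfin : P.E.Finite)
    (hreach : P.EntryReach entry)
    (hred : P.Reducible entry)
    {k : ℕ} (τ : Fin k → Upd n) (y : Fin k → Fin n)
    (hrank : RankingCondition (P.CFA entry) τ y) :
    P.Terminating := by
  rintro ⟨locs, upds, vals, htr⟩
  obtain ⟨hτinj, hτrange, hτlt, hτle⟩ := hrank
  classical
  -- the edges of the trace
  set edge : ℕ → VEdge n L := fun s => (locs s, upds s, locs (s+1)) with hedge
  -- finite segments of the trace are paths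
  have hseg : ∀ s₁ d, P.FPath (locs s₁)
      ((List.range d).map (fun r => edge (s₁ + r))) (locs (s₁ + d)) := by
    intro s₁ d
    induction d with
    | zero => simpa using VASS.FPath.nil (P := P) (locs s₁)
    | succ d ihd =>
      rw [List.range_succ, List.map_append]
      have he : (locs (s₁ + d), upds (s₁ + d), locs (s₁ + d + 1)) ∈ P.E := (htr (s₁ + d)).1
      have := VASS.fpath_snoc ihd he
      simpa [Nat.add_assoc, hedge] using this
  -- valuation bound along segments
  have hval : ∀ s₁ d j, (vals (s₁ + d) j : ℤ) ≤
      (vals s₁ j : ℤ) + VASS.contractUpd ((List.range d).map (fun r => edge (s₁ + r))) j := by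
    intro s₁ d j
    induction d with
    | zero => simp [VASS.contractUpd]
    | succ d ihd =>
      have h2 := (htr (s₁ + d)).2 j
      rw [List.range_succ, List.map_append, VASS.contractUpd_append]
      have hone : VASS.contractUpd ([edge (s₁ + d)].map (fun e => e)) j = upds (s₁ + d) j := by
        simp [VASS.contractUpd, hedge]
      have hone' : VASS.contractUpd (List.map (fun r => edge (s₁ + r)) [d]) j
          = upds (s₁ + d) j := by
        simp [VASS.contractUpd, hedge]
      have : (vals (s₁ + d + 1) j : ℤ) ≤ (vals (s₁ + d) j : ℤ) + upds (s₁ + d) j := h2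
      have hfin := this.trans (by linarith [ihd] : (vals (s₁ + d) j : ℤ) + upds (s₁ + d) j ≤
        (vals s₁ j : ℤ) + VASS.contractUpd ((List.range d).map (fun r => edge (s₁ + r))) j
          + upds (s₁ + d) j)
      calc (vals (s₁ + (d+1)) j : ℤ) = (vals (s₁ + d + 1) j : ℤ) := by rw [Nat.add_assoc]
      _ ≤ _ := hfin
      _ = _ := by rw [Pi.add_apply, hone']; ring
  -- some location occurs infinitely often
  obtain ⟨a, hfib⟩ := Finite.exists_infinite_fiber locs
  have hainf : {i : ℕ | locs i = a}.Infinite := by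
    rw [← Set.infinite_coe_iff]
    exact hfib
  set t : ℕ → ℕ := Nat.nth (fun i => locs i = a) with ht_def
  have ht_mem : ∀ i, locs (t i) = a := fun i => Nat.nth_mem_of_infinite hainf i
  have ht_mono : StrictMono t := Nat.nth_strictMono hainf
  -- lexicographic descent at each return to `a`
  have hmain : ∀ i, ∃ m : Fin k,
      (∀ r, r ≤ m → vals (t (i+1)) (y r) ≤ vals (t i) (y r)) ∧
      vals (t (i+1)) (y m) < vals (t i) (y m) := by
    intro i
    have hlt : t i < t (i+1) := ht_mono (Nat.lt_succ_self i)
    set d := t (i+1) - t i with hd_def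
    have hd : t i + d = t (i+1) := by omega
    set seg := (List.range d).map (fun r => edge (t i + r)) with hseg_def
    have hfp : P.FPath a seg a := by
      have h0 := hseg (t i) d
      rw [hd, ht_mem, ht_mem] at h0
      exact h0
    have hsegne : seg ≠ [] := by
      rw [hseg_def]
      simp only [ne_eq, List.map_eq_nil_iff, List.range_eq_nil]
      omega
    obtain ⟨l, hlne, hlmem, hlsum⟩ := VASS.cycle_decomp hred hfp hsegne
    obtain ⟨J, hJ⟩ := list_lift τ l (fun c hc => hτrange ▸ hlmem c hc)
    have hJne : J ≠ [] := by
      intro h0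
      rw [h0] at hJ
      exact hlne hJ.symm
    obtain ⟨m, hmJ, hmin⟩ := list_min_exists J hJne
    -- evaluate the contracted update
    have heval : ∀ j, VASS.contractUpd seg j = (J.map (fun s => τ s j)).sum := by
      intro j
      rw [congrFun hlsum j, VASS.sum_apply_list, ← hJ, List.map_map]
      rfl
    have hbound : ∀ r : Fin k, r ≤ m → VASS.contractUpd seg (y r) ≤ 0 := by
      intro r hr
      rw [heval]
      apply list_sum_nonpos
      intro x hx
      obtain ⟨s, hs, rfl⟩ := List.mem_map.1 hx
      exact hτle r s (hr.trans (hmin s hs))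
    have hstrict : VASS.contractUpd seg (y m) < 0 := by
      rw [heval]
      apply list_sum_neg _ ?_ (List.mem_map.2 ⟨m, hmJ, rfl⟩) (hτlt m)
      intro x hx
      obtain ⟨s, hs, rfl⟩ := List.mem_map.1 hx
      exact hτle m s (hmin s hs)
    have hv : ∀ j, (vals (t (i+1)) j : ℤ) ≤ (vals (t i) j : ℤ) + VASS.contractUpd seg j := by
      intro j
      have := hval (t i) d j
      rwa [hd] at this
    refine ⟨m, ?_, ?_⟩
    · intro r hr
      have h1 := hv (y r)
      have h2 := hbound r hr
      have h3 : (vals (t (i+1)) (y r) : ℤ) ≤ (vals (t i) (y r) : ℤ) := by linarith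
      exact_mod_cast h3
    · have h1 := hv (y m)
      have h3 : (vals (t (i+1)) (y m) : ℤ) < (vals (t i) (y m) : ℤ) := by linarith
      exact_mod_cast h3
  exact no_lex_descent k (fun i r => vals (t i) (y r)) hmain
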